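/- Let $R$ be a nontrivial reduced commutative ring whose only idempotents are $0$ and $1$, and let $\varphi : R[T,T^{-1}] \to R[T,T^{-1}]$ be an $R$-algebra homomorphism of the Laurent polynomial ring to itself. Then there exist a unique unit $u \in R^\times$ and a unique integer $n \in \mathbb{Z}$ such that $\varphi(T) = C(u) \cdot T^n$. -/

import Mathlib

open LaurentPolynomial

open Polynomial in
/-- In a domain, if `p * q = X ^ m`, then cross products of coefficients in
degrees not summing to `m` vanish. -/
lemma domain_coeff_mul_eq_zero {S : Type*} [CommRing S] [IsDomain S]
    {p q : S[X]} {m : ℕ} (h : p * q = X ^ m) {i j : ℕ} (hij : i + j ≠ m) :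
    p.coeff i * q.coeff j = 0 := by
  nontriviality S
  have hX : (X : S[X]) ^ m ≠ 0 := pow_ne_zero _ X_ne_zero
  have hp : p ≠ 0 := fun hp => hX (by rw [← h, hp, zero_mul])
  have hq : q ≠ 0 := fun hq => hX (by rw [← h, hq, mul_zero])
  have hdeg : p.natDegree + q.natDegree = m := by
    rw [← natDegree_mul hp hq, h, natDegree_X_pow]
  have htr : p.natTrailingDegree + q.natTrailingDegree = m := by
    rw [← natTrailingDegree_mul hp hq, h, natTrailingDegree_X_pow]
  have h1 := p.natTrailingDegree_le_natDegree
  have h2 := q.natTrailingDegree_le_natDegree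
  by_contra hne
  have hpi : p.coeff i ≠ 0 := fun h0 => hne (by rw [h0, zero_mul])
  have hqj : q.coeff j ≠ 0 := fun h0 => hne (by rw [h0, mul_zero])
  have hi1 := le_natDegree_of_ne_zero hpi
  have hi2 := natTrailingDegree_le_of_ne_zero hpi
  have hj1 := le_natDegree_of_ne_zero hqj
  have hj2 := natTrailingDegree_le_of_ne_zero hqj
  omega

open Polynomial in
/-- In a reduced commutative ring, if `p * q = X ^ m`, then cross products of coefficients in
degrees not summing to `m` vanish. -/
lemma reduced_coeff_mul_eq_zero {R : Type*} [CommRing R] [IsReduced R]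
    {p q : R[X]} {m : ℕ} (h : p * q = X ^ m) {i j : ℕ} (hij : i + j ≠ m) :
    p.coeff i * q.coeff j = 0 := by
  have : IsNilpotent (p.coeff i * q.coeff j) := by
    rw [nilpotent_iff_mem_prime]
    intro P hP
    have : IsDomain (R ⧸ P) := Ideal.Quotient.isDomain P
    have hmap : (p.map (Ideal.Quotient.mk P)) * (q.map (Ideal.Quotient.mk P)) = X ^ m := by
      rw [← Polynomial.map_mul, h, Polynomial.map_pow, map_X]
    have := domain_coeff_mul_eq_zero hmap hij
    rw [coeff_map, coeff_map, ← map_mul] at this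
    exact (Ideal.Quotient.eq_zero_iff_mem).mp this
  exact this.eq_zero

open Polynomial in
/-- Key lemma: over a nontrivial reduced ring with only trivial idempotents,
a factor of `X ^ m` is a unit times a power of `X`. -/
lemma eq_C_unit_mul_X_pow {R : Type*} [CommRing R] [Nontrivial R] [IsReduced R]
    (hidem : ∀ e : R, IsIdempotentElem e → e = 0 ∨ e = 1)
    {p q : R[X]} {m : ℕ} (h : p * q = X ^ m) :
    ∃ (u : Rˣ) (n : ℕ), p = Polynomial.C (u : R) * X ^ n := by
  have hsum : ∑ x ∈ Finset.HasAntidiagonal.antidiagonal m, p.coeff x.1 * q.coeff x.2 = 1 := by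
    rw [← Polynomial.coeff_mul, h, Polynomial.coeff_X_pow, if_pos rfl]
  -- cross terms vanish
  have hcross : ∀ x ∈ Finset.HasAntidiagonal.antidiagonal m, ∀ y ∈ Finset.HasAntidiagonal.antidiagonal m, x ≠ y →
      (p.coeff x.1 * q.coeff x.2) * (p.coeff y.1 * q.coeff y.2) = 0 := by
    intro x hx y hy hxy
    rw [Finset.HasAntidiagonal.mem_antidiagonal] at hx hy
    have hxy2 : x.1 + y.2 ≠ m := by
      intro hc
      apply hxy
      have : x.2 = y.2 := by omega
      have : x.1 = y.1 := by omega
      exact Prod.ext ‹x.1 = y.1› ‹x.2 = y.2›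
    have h0 : p.coeff x.1 * q.coeff y.2 = 0 := reduced_coeff_mul_eq_zero h hxy2
    calc (p.coeff x.1 * q.coeff x.2) * (p.coeff y.1 * q.coeff y.2)
        = (p.coeff x.1 * q.coeff y.2) * (p.coeff y.1 * q.coeff x.2) := by ring
      _ = 0 := by rw [h0, zero_mul]
  -- each term is idempotent
  have hidp : ∀ x ∈ Finset.HasAntidiagonal.antidiagonal m,
      IsIdempotentElem (p.coeff x.1 * q.coeff x.2) := by
    intro x hx
    have : p.coeff x.1 * q.coeff x.2
        = (p.coeff x.1 * q.coeff x.2) * ∑ y ∈ Finset.HasAntidiagonal.antidiagonal m, p.coeff y.1 * q.coeff y.2 := by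
      rw [hsum, mul_one]
    unfold IsIdempotentElem
    conv_rhs => rw [this, Finset.mul_sum]
    rw [Finset.sum_eq_single x (fun y hy hyx => hcross x hx y hy (Ne.symm hyx))
      (fun hx' => absurd hx hx')]
  -- some term is 1
  have hex : ∃ x ∈ Finset.HasAntidiagonal.antidiagonal m, p.coeff x.1 * q.coeff x.2 = 1 := by
    by_contra hc
    push_neg at hc
    have : ∑ x ∈ Finset.HasAntidiagonal.antidiagonal m, p.coeff x.1 * q.coeff x.2 = 0 :=
      Finset.sum_eq_zero fun x hx => (hidem _ (hidp x hx)).resolve_right (hc x hx)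
    rw [hsum] at this
    exact one_ne_zero this
  obtain ⟨x, hx, hx1⟩ := hex
  rw [Finset.HasAntidiagonal.mem_antidiagonal] at hx
  have hu : IsUnit (p.coeff x.1) := IsUnit.of_mul_eq_one _ hx1
  obtain ⟨u, hu⟩ := hu
  refine ⟨u, x.1, ?_⟩
  ext i
  rw [Polynomial.coeff_C_mul, Polynomial.coeff_X_pow, hu]
  by_cases hi : i = x.1
  · simp [hi]
  · rw [if_neg hi, mul_zero]
    have hix2 : i + x.2 ≠ m := by omega
    calc p.coeff i = p.coeff i * (p.coeff x.1 * q.coeff x.2) := by rw [hx1, mul_one]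
      _ = (p.coeff i * q.coeff x.2) * p.coeff x.1 := by ring
      _ = 0 := by rw [reduced_coeff_mul_eq_zero h hix2, zero_mul]

/-- `C u * T a = C v * T b` forces `u = v` and `a = b` for units. -/
lemma C_unit_mul_T_inj {R : Type*} [CommRing R] [Nontrivial R]
    {u v : Rˣ} {a b : ℤ}
    (h : (C (u : R) * T a : LaurentPolynomial R) = C (v : R) * T b) :
    u = v ∧ a = b := by
  rw [← single_eq_C_mul_T, ← single_eq_C_mul_T] at h
  rcases AddMonoidAlgebra.single_inj.mp h with ⟨ha, hu⟩ | ⟨hu, _⟩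
  · exact ⟨Units.ext hu, ha⟩
  · exact absurd hu u.ne_zero

/-- Over a nontrivial reduced commutative ring whose only idempotents are `0` and `1`,
any `R`-algebra endomorphism of the Laurent polynomial ring sends `T` to `C u * T n`
for a unique unit `u` of `R` and a unique integer `n`. -/
theorem laurentPolynomial_algHom_apply_T
    (R : Type*) [CommRing R] [Nontrivial R] [IsReduced R]
    (hidem : ∀ e : R, IsIdempotentElem e → e = 0 ∨ e = 1)
    (φ : LaurentPolynomial R →ₐ[R] LaurentPolynomial R) :
    ∃! p : Rˣ × ℤ, φ (T 1) = C (p.1 : R) * T p.2 := by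
  set f := φ (T 1) with hf
  have hfu : IsUnit f := (isUnit_T 1).map φ
  obtain ⟨g, hfg⟩ := isUnit_iff_exists_inv.mp hfu
  obtain ⟨n₁, p, hp⟩ := exists_T_pow f
  obtain ⟨n₂, q, hq⟩ := exists_T_pow g
  have hpq : p * q = Polynomial.X ^ (n₁ + n₂) := by
    apply Polynomial.toLaurent_injective
    rw [map_mul, hp, hq, Polynomial.toLaurent_X_pow]
    calc f * T (n₁ : ℤ) * (g * T (n₂ : ℤ))
        = (f * g) * (T (n₁ : ℤ) * T (n₂ : ℤ)) := by ring
      _ = T (((n₁ + n₂ : ℕ) : ℤ)) := by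
          rw [hfg, one_mul, ← T_add]; push_cast; ring_nf
  obtain ⟨u, n, hpn⟩ := eq_C_unit_mul_X_pow hidem hpq
  have hfT : f = C (u : R) * T ((n : ℤ) - n₁) := by
    have h1 : f * T (n₁ : ℤ) = C (u : R) * T (n : ℤ) := by
      rw [← hp, hpn, map_mul, Polynomial.toLaurent_C, Polynomial.toLaurent_X_pow]
    have := congrArg (· * T (-(n₁ : ℤ))) h1
    simp only [mul_T_assoc] at this
    rw [add_neg_cancel, T_zero, mul_one] at this
    rw [this, sub_eq_add_neg]
  refine ⟨(u, (n : ℤ) - n₁), hfT, ?_⟩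
  rintro ⟨v, b⟩ hvb
  have := C_unit_mul_T_inj (hvb.symm.trans hfT)
  simp only [Prod.mk.injEq]
  exact ⟨this.1, this.2⟩
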